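/- Let G be a Lie group with Lie algebra 𝔩. The map Θ ↦ θ := Θ|_e establishes a linear isomorphism between the space Ω¹_mult(G) of multiplicative 1-forms on G and the space (𝔩*)^G of Ad*-invariant elements of 𝔩*; under this isomorphism, Θ_g = R_g* θ = L_g* θ for every g ∈ G (i.e. every multiplicative 1-form is bi-invariant with invariant value θ, and conversely every Ad*-invariant θ ∈ 𝔩* extends uniquely to a multiplicative 1-form). -/

import Mathlib

section helpers

variable {E : Type*} [NormedAddCommGroup E] [NormedSpace ℝ E]
    {H : Type*} [TopologicalSpace H] (I : ModelWithCorners ℝ E H)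
    {G : Type*} [TopologicalSpace G] [ChartedSpace H G] [Group G] [LieGroup I (⊤ : ℕ∞) G]

set_option linter.unusedSectionVars false in
lemma mfd_id (f : G → G) (hf : ∀ k, f k = k) (x : G) (v : TangentSpace I x) :
    mfderiv I I f x v = v := by
  have h : f = id := funext hf
  subst h
  rw [mfderiv_id]
  rfl

set_option linter.unusedSectionVars false in
lemma mfd_comp (f₁ f₂ f₃ : G → G) (x y : G) (hy : f₂ x = y)
    (hcomp : ∀ k, f₁ (f₂ k) = f₃ k)
    (h₁ : MDifferentiableAt I I f₁ y) (h₂ : MDifferentiableAt I I f₂ x)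
    (v : TangentSpace I x) :
    mfderiv I I f₁ y (mfderiv I I f₂ x v) = mfderiv I I f₃ x v := by
  subst hy
  have h : f₃ = f₁ ∘ f₂ := funext fun k => (hcomp k).symm
  rw [h, mfderiv_comp x h₁ h₂]
  rfl

variable (G) in
theorem multiplicative_one_forms_aux :
    (∀ Θ : G → (E →ₗ[ℝ] ℝ),
      (∀ (g h : G) (X Y : E),
          Θ (g * h) (mfderiv I I (fun k => g * k) h Y
              + mfderiv I I (fun k => k * h) g X)
            = Θ h Y + Θ g X)
        ↔
      ((∀ (g : G) (x : E),
          Θ 1 (mfderiv I I (fun k => g * k * g⁻¹) 1 x) = Θ 1 x) ∧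
        (∀ (g : G) (x : E),
          Θ g (mfderiv I I (fun k => k * g) 1 x) = Θ 1 x) ∧
        (∀ (g : G) (x : E),
          Θ g (mfderiv I I (fun k => g * k) 1 x) = Θ 1 x))) ∧
    (∀ θ : E →ₗ[ℝ] ℝ,
      (∀ (g : G) (x : E),
          θ (mfderiv I I (fun k => g * k * g⁻¹) 1 x) = θ x) →
      ∃! Θ : G → (E →ₗ[ℝ] ℝ),
        (∀ (g h : G) (X Y : E),
          Θ (g * h) (mfderiv I I (fun k => g * k) h Y
              + mfderiv I I (fun k => k * h) g X)
            = Θ h Y + Θ g X) ∧ Θ 1 = θ) := by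
  have mdL : ∀ (g x : G), MDifferentiableAt I I (fun k => g * k) x :=
    fun g x => mdifferentiableAt_mul_left
  have mdR : ∀ (g x : G), MDifferentiableAt I I (fun k => k * g) x :=
    fun g x => mdifferentiableAt_mul_right
  have mdC : ∀ (g x : G), MDifferentiableAt I I (fun k => g * k * g⁻¹) x := fun g x =>
    (mdifferentiableAt_mul_right (a := g⁻¹) (b := g * x)).comp x mdifferentiableAt_mul_left
  -- right invariance from multiplicativity
  have fwdR : ∀ Θ : G → (E →ₗ[ℝ] ℝ),
      (∀ (g h : G) (X Y : E),
          Θ (g * h) (mfderiv I I (fun k => g * k) h Y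
              + mfderiv I I (fun k => k * h) g X)
            = Θ h Y + Θ g X) →
      ∀ (g : G) (x : E),
          Θ g (mfderiv I I (fun k => k * g) 1 x) = Θ 1 x := by
    intro Θ hm g x
    have h := hm 1 g x 0
    rw [one_mul] at h
    have hz : mfderiv I I (fun k : G => 1 * k) g (0 : E) = 0 := map_zero _
    refine Eq.trans ?_ (h.trans (by simp))
    congr 1
    exact ((congrArg (· + _) hz).trans (zero_add _)).symm
  -- left invariance from multiplicativity
  have fwdL : ∀ Θ : G → (E →ₗ[ℝ] ℝ),
      (∀ (g h : G) (X Y : E),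
          Θ (g * h) (mfderiv I I (fun k => g * k) h Y
              + mfderiv I I (fun k => k * h) g X)
            = Θ h Y + Θ g X) →
      ∀ (g : G) (x : E),
          Θ g (mfderiv I I (fun k => g * k) 1 x) = Θ 1 x := by
    intro Θ hm g x
    have h := hm g 1 0 x
    rw [mul_one] at h
    have hz : mfderiv I I (fun k : G => k * 1) g (0 : E) = 0 := map_zero _
    refine Eq.trans ?_ (h.trans (by simp))
    congr 1
    exact ((congrArg (_ + ·) hz).trans (add_zero _)).symm
  constructor
  · intro Θ
    constructor
    · intro hm
      refine ⟨?_, fwdR Θ hm, fwdL Θ hm⟩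
      -- Ad-invariance
      intro g x
      have e1 : mfderiv I I (fun k => g * k * g⁻¹) 1 x
          = mfderiv I I (fun k => k * g⁻¹) g (mfderiv I I (fun k => g * k) 1 x) :=
        (mfd_comp I (fun k => k * g⁻¹) (fun k => g * k) (fun k => g * k * g⁻¹) 1 g
          (mul_one g) (fun k => rfl) (mdR g⁻¹ g) (mdL g 1) x).symm
      have h2 := hm g g⁻¹ (mfderiv I I (fun k => g * k) 1 x) 0
      rw [mul_inv_cancel] at h2
      simp only [map_zero, zero_add, add_zero] at h2
      rw [e1]
      have hz : mfderiv I I (fun k : G => g * k) g⁻¹ (0 : E) = 0 := map_zero _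
      refine Eq.trans ?_ (h2.trans (fwdL Θ hm g x))
      congr 1
      exact ((congrArg (· + _) hz).trans (zero_add _)).symm
    · rintro ⟨-, hR, hL⟩
      intro g h X Y
      have hYrep : mfderiv I I (fun k => h * k) 1
          (mfderiv I I (fun k => h⁻¹ * k) h Y) = Y := by
        rw [mfd_comp I (fun k => h * k) (fun k => h⁻¹ * k) (fun k => k) h 1
          (inv_mul_cancel h) (fun k => mul_inv_cancel_left h k) (mdL h 1) (mdL h⁻¹ h) Y]
        exact mfd_id I (fun k => k) (fun k => rfl) h Y
      have hXrep : mfderiv I I (fun k => k * g) 1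
          (mfderiv I I (fun k => k * g⁻¹) g X) = X := by
        rw [mfd_comp I (fun k => k * g) (fun k => k * g⁻¹) (fun k => k) g 1
          (mul_inv_cancel g) (fun k => inv_mul_cancel_right k g) (mdR g 1) (mdR g⁻¹ g) X]
        exact mfd_id I (fun k => k) (fun k => rfl) g X
      set y := mfderiv I I (fun k => h⁻¹ * k) h Y with hy
      set xr := mfderiv I I (fun k => k * g⁻¹) g X with hxr
      have claim1 : Θ (g * h) (mfderiv I I (fun k => g * k) h Y) = Θ h Y := by
        rw [← hYrep]
        rw [mfd_comp I (fun k => g * k) (fun k => h * k) (fun k => g * h * k) 1 h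
          (mul_one h) (fun k => (mul_assoc g h k).symm) (mdL g h) (mdL h 1) y]
        rw [hL (g * h) y, hL h y]
      have claim2 : Θ (g * h) (mfderiv I I (fun k => k * h) g X) = Θ g X := by
        rw [← hXrep]
        rw [mfd_comp I (fun k => k * h) (fun k => k * g) (fun k => k * (g * h)) 1 g
          (one_mul g) (fun k => mul_assoc k g h) (mdR h g) (mdR g 1) xr]
        rw [hR (g * h) xr, hR g xr]
      refine ((Θ (g * h)).map_add _ _).trans ?_
      rw [claim1, claim2]
  · intro θ hAd
    refine ⟨fun g => θ.comp (mfderiv I I (fun k => k * g⁻¹) g : E →L[ℝ] E).toLinearMap,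
      ⟨?_, ?_⟩, ?_⟩
    · -- multiplicativity of the extension
      intro g h X Y
      simp only [LinearMap.comp_apply, ContinuousLinearMap.coe_coe, map_add]
      have eB : mfderiv I I (fun k => k * (g * h)⁻¹) (g * h)
          (mfderiv I I (fun k => k * h) g X)
          = mfderiv I I (fun k => k * g⁻¹) g X := by
        refine mfd_comp I (fun k => k * (g * h)⁻¹) (fun k => k * h)
          (fun k => k * g⁻¹) g (g * h) rfl (fun k => ?_) (mdR (g*h)⁻¹ (g*h)) (mdR h g) X
        show k * h * (g * h)⁻¹ = k * g⁻¹
        rw [mul_inv_rev, ← mul_assoc, mul_inv_cancel_right]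
      have eA : mfderiv I I (fun k => k * (g * h)⁻¹) (g * h)
          (mfderiv I I (fun k => g * k) h Y)
          = mfderiv I I (fun k => g * (k * h⁻¹) * g⁻¹) h Y := by
        refine mfd_comp I (fun k => k * (g * h)⁻¹) (fun k => g * k)
          (fun k => g * (k * h⁻¹) * g⁻¹) h (g * h) rfl (fun k => ?_)
          (mdR (g*h)⁻¹ (g*h)) (mdL g h) Y
        show g * k * (g * h)⁻¹ = g * (k * h⁻¹) * g⁻¹
        rw [mul_inv_rev]
        group
      have eA2 : mfderiv I I (fun k => g * (k * h⁻¹) * g⁻¹) h Y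
          = mfderiv I I (fun k => g * k * g⁻¹) 1 (mfderiv I I (fun k => k * h⁻¹) h Y) :=
        (mfd_comp I (fun k => g * k * g⁻¹) (fun k => k * h⁻¹)
          (fun k => g * (k * h⁻¹) * g⁻¹) h 1 (mul_inv_cancel h) (fun k => rfl)
          (mdC g 1) (mdR h⁻¹ h) Y).symm
      have h1 : θ (mfderiv I I (fun k => k * (g * h)⁻¹) (g * h)
            (mfderiv I I (fun k => g * k) h Y))
          = θ (mfderiv I I (fun k => k * h⁻¹) h Y) := by
        rw [eA, eA2]
        exact hAd g (mfderiv I I (fun k => k * h⁻¹) h Y)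
      have h2 : θ (mfderiv I I (fun k => k * (g * h)⁻¹) (g * h)
            (mfderiv I I (fun k => k * h) g X))
          = θ (mfderiv I I (fun k => k * g⁻¹) g X) := congrArg θ eB
      exact (congrArg θ (map_add (mfderiv I I (fun k => k * (g * h)⁻¹) (g * h))
        (mfderiv I I (fun k => g * k) h Y) (mfderiv I I (fun k => k * h) g X))).trans
        ((θ.map_add _ _).trans (congrArg₂ (· + ·) h1 h2))
    · -- value at the identity
      apply LinearMap.ext
      intro x
      simp only [LinearMap.comp_apply, ContinuousLinearMap.coe_coe]
      exact congrArg θ (mfd_id I (fun k => k * (1 : G)⁻¹) (fun k => by simp) 1 x)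
    · -- uniqueness
      rintro Θ' ⟨hm', h1'⟩
      funext g
      apply LinearMap.ext
      intro X
      have hrep : mfderiv I I (fun k => k * g) 1
          (mfderiv I I (fun k => k * g⁻¹) g X) = X := by
        rw [mfd_comp I (fun k => k * g) (fun k => k * g⁻¹) (fun k => k) g 1
          (mul_inv_cancel g) (fun k => inv_mul_cancel_right k g) (mdR g 1) (mdR g⁻¹ g) X]
        exact mfd_id I (fun k => k) (fun k => rfl) g X
      have hx := fwdR Θ' hm' g (mfderiv I I (fun k => k * g⁻¹) g X)
      rw [hrep, h1'] at hx
      exact hx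

end helpers


/-!
STATEMENT 14.  Let `G` be a Lie group with Lie algebra `𝔩 = T₁G`.  The map
`Θ ↦ θ := Θ|₁` establishes a linear isomorphism between the space `Ω¹_mult(G)` of
multiplicative 1-forms on `G` (those with
`Θ_{gh}((L_g)_*Y + (R_h)_*X) = Θ_h(Y) + Θ_g(X)` for `X ∈ T_gG`, `Y ∈ T_hG`) and the
space `(𝔩*)^G` of `Ad*`-invariant elements of `𝔩*`; under this isomorphism
`Θ_g = R_g*θ = L_g*θ` for every `g`, i.e. every multiplicative 1-form is bi-invariant
with invariant value `θ`, and conversely every `Ad*`-invariant `θ` extends uniquely to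
a multiplicative 1-form.
-/

theorem multiplicative_one_forms_lie_group
    {E : Type*} [NormedAddCommGroup E] [NormedSpace ℝ E]
    {H : Type*} [TopologicalSpace H] (I : ModelWithCorners ℝ E H)
    (G : Type*) [TopologicalSpace G] [ChartedSpace H G] [Group G] [LieGroup I (⊤ : ℕ∞) G] :
    -- a 1-form `Θ` is multiplicative iff its value `θ = Θ 1` at the identity is
    -- `Ad*`-invariant and `Θ` is the bi-invariant extension of `θ`
    (∀ Θ : (g : G) → (TangentSpace I g →ₗ[ℝ] ℝ),
      (∀ (g h : G) (X : TangentSpace I g) (Y : TangentSpace I h),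
          Θ (g * h) (mfderiv I I (fun k => g * k) h Y
              + mfderiv I I (fun k => k * h) g X)
            = Θ h Y + Θ g X)
        ↔
      ((∀ (g : G) (x : TangentSpace I (1 : G)),
          Θ 1 (mfderiv I I (fun k => g * k * g⁻¹) 1 x) = Θ 1 x) ∧
        (∀ (g : G) (x : TangentSpace I (1 : G)),
          Θ g (mfderiv I I (fun k => k * g) 1 x) = Θ 1 x) ∧
        (∀ (g : G) (x : TangentSpace I (1 : G)),
          Θ g (mfderiv I I (fun k => g * k) 1 x) = Θ 1 x))) ∧
    -- conversely, every `Ad*`-invariant `θ ∈ 𝔩*` extends uniquely to a multiplicative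
    -- 1-form
    (∀ θ : TangentSpace I (1 : G) →ₗ[ℝ] ℝ,
      (∀ (g : G) (x : TangentSpace I (1 : G)),
          θ (mfderiv I I (fun k => g * k * g⁻¹) 1 x) = θ x) →
      ∃! Θ : (g : G) → (TangentSpace I g →ₗ[ℝ] ℝ),
        (∀ (g h : G) (X : TangentSpace I g) (Y : TangentSpace I h),
          Θ (g * h) (mfderiv I I (fun k => g * k) h Y
              + mfderiv I I (fun k => k * h) g X)
            = Θ h Y + Θ g X) ∧ Θ 1 = θ) := by
  exact multiplicative_one_forms_aux I G
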